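/- On the open set {(S,I) ∈ ℝ² : S + I ≠ 0, S ≠ 0, I ≠ 0}, the vector fields X̄₁ = (−SI/(S+I)) ∂/∂S + (SI/(S+I)) ∂/∂I and X̄₂ = (I − SI/(S+I)) ∂/∂S − (I − SI/(S+I)) ∂/∂I satisfy [X̄₁, X̄₂] = X̄₂. -/

import Mathlib

/-- Lie bracket of vector fields on an open subset of ℝ², identified with
coefficient functions `(S,I) ↦ (f(S,I), g(S,I))`. -/
noncomputable def vbr (X Y : ℝ × ℝ → ℝ × ℝ) : ℝ × ℝ → ℝ × ℝ :=
  fun p => fderiv ℝ Y p (X p) - fderiv ℝ X p (Y p)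

/-- On `{(S,I) : S + I ≠ 0, S ≠ 0, I ≠ 0}`, the SIS vector fields
`X̄₁ = (−SI/(S+I)) ∂_S + (SI/(S+I)) ∂_I` and
`X̄₂ = (I − SI/(S+I)) ∂_S − (I − SI/(S+I)) ∂_I` satisfy `[X̄₁, X̄₂] = X̄₂`. -/
theorem stmt_8 :
    let X₁ : ℝ × ℝ → ℝ × ℝ := fun z =>
      (-(z.1 * z.2) / (z.1 + z.2), z.1 * z.2 / (z.1 + z.2))
    let X₂ : ℝ × ℝ → ℝ × ℝ := fun z =>
      (z.2 - z.1 * z.2 / (z.1 + z.2), -(z.2 - z.1 * z.2 / (z.1 + z.2)))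
    ∀ z : ℝ × ℝ, z.1 + z.2 ≠ 0 → z.1 ≠ 0 → z.2 ≠ 0 →
      vbr X₁ X₂ z = X₂ z := by
  intro X₁ X₂ z h hs hi
  have hmul := (hasFDerivAt_fst (𝕜 := ℝ) (E := ℝ) (F := ℝ) (p := z)).mul
    (hasFDerivAt_snd (𝕜 := ℝ) (E := ℝ) (F := ℝ) (p := z))
  have hadd := (hasFDerivAt_fst (𝕜 := ℝ) (E := ℝ) (F := ℝ) (p := z)).add
    (hasFDerivAt_snd (𝕜 := ℝ) (E := ℝ) (F := ℝ) (p := z))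
  have hinv := (hasFDerivAt_inv' (𝕜 := ℝ) h).comp z hadd
  have hf := hmul.mul hinv
  have h1 : HasFDerivAt X₁ _ z := HasFDerivAt.prodMk (hmul.neg.mul hinv) hf
  have h2 : HasFDerivAt X₂ _ z := HasFDerivAt.prodMk (hasFDerivAt_snd.sub hf) (hasFDerivAt_snd.sub hf).neg
  show fderiv ℝ X₂ z (X₁ z) - fderiv ℝ X₁ z (X₂ z) = X₂ z
  rw [h1.fderiv, h2.fderiv]
  simp only [ContinuousLinearMap.prod_apply, ContinuousLinearMap.smul_apply,
    ContinuousLinearMap.sub_apply, ContinuousLinearMap.add_apply,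
    ContinuousLinearMap.neg_apply, ContinuousLinearMap.coe_fst',
    ContinuousLinearMap.coe_snd', ContinuousLinearMap.smulRight_apply,
    ContinuousLinearMap.one_apply, smul_eq_mul, ContinuousLinearMap.comp_apply,
    ContinuousLinearMap.mulLeftRight_apply, ContinuousLinearMap.coe_comp',
    Prod.mk_sub_mk, X₁, X₂]
  refine Prod.ext ?_ ?_ <;> simp <;> field_simp <;> ring
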